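/- Let X be a k1-dimensional and Y a k2-dimensional subspace of F_q^n. Then the subspace distance satisfies d_S(X,Y) = d_H(v(X), v(Y)) + 2·rank(X̃_μ − Ỹ_μ), where d_H denotes Hamming distance. -/

import Mathlib

/-- `M` is in reduced row echelon form with pivot (leading-one) column of row `i`
given by `piv i`: pivots strictly move right, each leading coefficient is `1`,
it is the first nonzero entry of its row, and it is the only nonzero entry of
its column. -/
def IsRREFWithPivots {F : Type*} [Field F] {k n : ℕ}
    (M : Matrix (Fin k) (Fin n) F) (piv : Fin k → Fin n) : Prop :=
  StrictMono piv ∧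
  (∀ i, M i (piv i) = 1) ∧
  (∀ (i : Fin k) (j : Fin n), j < piv i → M i j = 0) ∧
  (∀ i i' : Fin k, i' ≠ i → M i' (piv i) = 0)

/-- `M` is in reduced row echelon form. -/
def IsRREF {F : Type*} [Field F] {k n : ℕ} (M : Matrix (Fin k) (Fin n) F) : Prop :=
  ∃ piv, IsRREFWithPivots M piv

/-- The identifying (binary) vector associated with pivot columns `piv`:
its ones are exactly in the pivot positions. -/
def idVec {k n : ℕ} (piv : Fin k → Fin n) : Fin n → Bool :=
  fun j => decide (∃ i, piv i = j)

/-- The subspace distance `d_S(X,Y) = dim X + dim Y - 2 dim (X ⊓ Y)`. -/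
noncomputable def subDist {F : Type*} [Field F] {n : ℕ} (X Y : Submodule F (Fin n → F)) : ℕ :=
  Module.finrank F X + Module.finrank F Y - 2 * Module.finrank F ↥(X ⊓ Y)

open Finset Module Submodule

section RREF
variable {F : Type*} [Field F] {k n : ℕ}
variable {M : Matrix (Fin k) (Fin n) F} {piv : Fin k → Fin n}

theorem rref_sum_coord (h : IsRREFWithPivots M piv) (c : Fin k → F) (j : Fin k) :
    (∑ i, c i • M i) (piv j) = c j := by
  have h1 : (∑ i, c i • M i) (piv j) = ∑ i, c i * M i (piv j) := by
    simp [Finset.sum_apply]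
  rw [h1, Finset.sum_eq_single j]
  · rw [h.2.1 j, mul_one]
  · intro i _ hi; rw [h.2.2.2 j i hi, mul_zero]
  · simp

theorem rref_expand (h : IsRREFWithPivots M piv) {v : Fin n → F}
    (hv : v ∈ span F (Set.range M)) : v = ∑ i, v (piv i) • M i := by
  obtain ⟨c, hc⟩ := (mem_span_range_iff_exists_fun F).1 hv
  have : ∀ j, v (piv j) = c j := fun j => by rw [← hc, rref_sum_coord h]
  conv_lhs => rw [← hc]
  exact Finset.sum_congr rfl fun i _ => by rw [this i]

theorem rref_li (h : IsRREFWithPivots M piv) : LinearIndependent F M := by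
  refine Fintype.linearIndependent_iff.2 ?_
  intro g hg i
  have := rref_sum_coord h g i
  rw [hg] at this; simpa using this.symm

theorem rref_finrank (h : IsRREFWithPivots M piv) :
    finrank F (span F (Set.range M)) = k := by
  have := finrank_span_eq_card (R := F) (rref_li h)
  rw [Fintype.card_fin] at this
  exact this

/-- leading-coordinate lemma for predicate-supported combinations -/
theorem rref_lead (h : IsRREFWithPivots M piv) (c : Fin k → F) (pred : Fin k → Prop)
    (hc : ∀ i, c i ≠ 0 → pred i) (hv : (∑ i, c i • M i) ≠ 0) :
    ∃ i, pred i ∧ (∑ i', c i' • M i') (piv i) ≠ 0 ∧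
      ∀ j, j < piv i → (∑ i', c i' • M i') j = 0 := by
  classical
  have hne : (Finset.univ.filter fun i => c i ≠ 0).Nonempty := by
    by_contra hemp
    rw [Finset.not_nonempty_iff_eq_empty, Finset.filter_eq_empty_iff] at hemp
    exact hv (Finset.sum_eq_zero fun i _ => by
      have : c i = 0 := by by_contra hci; exact hemp (Finset.mem_univ i) hci
      rw [this, zero_smul])
  obtain ⟨i0, hi0mem, hi0min⟩ := (Finset.univ.filter fun i => c i ≠ 0).exists_min_image id hne
  rw [Finset.mem_filter] at hi0mem
  refine ⟨i0, hc i0 hi0mem.2, ?_, ?_⟩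
  · rw [rref_sum_coord h]; exact hi0mem.2
  · intro j hj
    have : (∑ i', c i' • M i') j = ∑ i', c i' * M i' j := by simp [Finset.sum_apply]
    rw [this]
    refine Finset.sum_eq_zero fun i _ => ?_
    by_cases hci : c i = 0
    · rw [hci, zero_mul]
    · have : i0 ≤ i := hi0min i (Finset.mem_filter.2 ⟨Finset.mem_univ i, hci⟩)
      have : piv i0 ≤ piv i := h.1.monotone this
      rw [h.2.2.1 i j (lt_of_lt_of_le hj this), mul_zero]

theorem lead_unique {v : Fin n → F} {c c' : Fin n} (h1 : v c ≠ 0)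
    (h2 : ∀ j, j < c → v j = 0) (h3 : v c' ≠ 0) (h4 : ∀ j, j < c' → v j = 0) :
    c = c' := by
  rcases lt_trichotomy c c' with h | h | h
  · exact absurd (h4 c h) h1
  · exact h
  · exact absurd (h2 c' h) h3

theorem span_apply_zero {S : Set (Fin n → F)} {j : Fin n} (hS : ∀ v ∈ S, v j = 0)
    {v : Fin n → F} (hv : v ∈ span F S) : v j = 0 := by
  have hle : span F S ≤ LinearMap.ker (LinearMap.proj (R := F) (φ := fun _ : Fin n => F) j) :=
    span_le.2 fun w hw => LinearMap.mem_ker.2 (hS w hw)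
  exact hle hv

end RREF

theorem idVec_true_iff {k n : ℕ} {piv : Fin k → Fin n} {c : Fin n} :
    idVec piv c = true ↔ ∃ i, piv i = c := by simp [idVec]

theorem idVec_false_iff {k n : ℕ} {piv : Fin k → Fin n} {c : Fin n} :
    idVec piv c = false ↔ ¬∃ i, piv i = c := by simp [idVec]

section RREF2
variable {F : Type*} [Field F] {k n : ℕ}
variable {M : Matrix (Fin k) (Fin n) F} {piv : Fin k → Fin n}

theorem exists_coeff_of_mem_subspan (pred : Fin k → Prop) [DecidablePred pred] {v : Fin n → F}
    (hv : v ∈ span F (Set.range fun i : {i // pred i} => M i.1)) :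
    ∃ C : Fin k → F, (∀ i, C i ≠ 0 → pred i) ∧ ∑ i, C i • M i = v := by
  obtain ⟨c, hc⟩ := (mem_span_range_iff_exists_fun F).1 hv
  refine ⟨fun i => if h : pred i then c ⟨i, h⟩ else 0, fun i hi => ?_, ?_⟩
  · by_contra hp; exact hi (dif_neg hp)
  · rw [← Finset.sum_filter_of_ne (p := pred) (fun i _ hne => by
      by_contra hp
      exact hne (show (if h : pred i then c ⟨i, h⟩ else 0) • M i = 0 by
        rw [dif_neg hp, zero_smul]))]
    rw [Finset.sum_subtype (p := pred) (Finset.univ.filter pred)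
      (fun i => by simp) (fun i => (if h : pred i then c ⟨i, h⟩ else 0) • M i)]
    rw [← hc]
    exact Finset.sum_congr rfl fun i _ => by rw [dif_pos i.2]

theorem mem_subspan_of_coeff (pred : Fin k → Prop) [DecidablePred pred] (c : Fin k → F)
    (hc : ∀ i, c i ≠ 0 → pred i) :
    (∑ i, c i • M i) ∈ span F (Set.range fun i : {i // pred i} => M i.1) := by
  rw [mem_span_range_iff_exists_fun]
  refine ⟨fun i => c i.1, ?_⟩
  rw [← Finset.sum_subtype (p := pred) (Finset.univ.filter pred) (fun i => by simp)
    (fun i => c i • M i)]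
  exact Finset.sum_filter_of_ne (fun i _ hne => by
    by_contra hp; exact hne (by rw [(by by_contra h0; exact hp (hc i h0) : c i = 0), zero_smul]))

theorem subspan_finrank (h : IsRREFWithPivots M piv) (pred : Fin k → Prop) [DecidablePred pred] :
    finrank F (span F (Set.range fun i : {i // pred i} => M i.1)) = Fintype.card {i // pred i} := by
  have hli : LinearIndependent F (fun i : {i // pred i} => M i.1) :=
    (rref_li h).comp Subtype.val Subtype.val_injective
  exact finrank_span_eq_card (R := F) hli

end RREF2

theorem stack_span_eq {F : Type*} [Field F] {n : ℕ} {m₁ m₂ : Type*}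
    (A : Matrix m₁ (Fin n) F) (B : Matrix m₂ (Fin n) F) :
    span F (Set.range (Matrix.fromRows A B)) = span F (Set.range A) ⊔ span F (Set.range B) := by
  have hr : Set.range (Matrix.fromRows A B) = Set.range A ∪ Set.range B := by
    ext v
    constructor
    · rintro ⟨i, rfl⟩
      cases i with
      | inl i => exact Or.inl ⟨i, rfl⟩
      | inr i => exact Or.inr ⟨i, rfl⟩
    · rintro (⟨i, rfl⟩ | ⟨i, rfl⟩)
      · exact ⟨Sum.inl i, rfl⟩
      · exact ⟨Sum.inr i, rfl⟩
  rw [hr, Submodule.span_union]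

section Stack
variable {F : Type*} [Field F] {n a b r : ℕ}
variable {M1 : Matrix (Fin a) (Fin n) F} {piv1 : Fin a → Fin n}
variable {M2 : Matrix (Fin b) (Fin n) F} {piv2 : Fin b → Fin n}
variable {P : Matrix (Fin r) (Fin n) F} {pivP : Fin r → Fin n}

theorem stack_spanP (h1 : IsRREFWithPivots M1 piv1) (h2 : IsRREFWithPivots M2 piv2)
    (hP : IsRREFWithPivots P pivP)
    (hsp : span F (Set.range P) = span F (Set.range (Matrix.fromRows M1
      (Matrix.of fun (i : {i : Fin b // idVec piv1 (piv2 i) = false}) j => M2 i.1 j)))) :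
    span F (Set.range P) = span F (Set.range M1) ⊔
      span F (Set.range fun i : {i : Fin b // idVec piv1 (piv2 i) = false} => M2 i.1) := by
  rw [hsp, stack_span_eq]
  rfl

theorem stack_disjoint (h1 : IsRREFWithPivots M1 piv1) (h2 : IsRREFWithPivots M2 piv2) :
    span F (Set.range M1) ⊓
      (span F (Set.range fun i : {i : Fin b // idVec piv1 (piv2 i) = false} => M2 i.1)) = ⊥ := by
  rw [eq_bot_iff]
  rintro v ⟨hv1, hv2⟩
  simp only [Submodule.mem_bot]
  by_contra hv0
  have hexp := rref_expand h1 hv1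
  obtain ⟨i1, -, hco1, hlow1⟩ := rref_lead h1 (fun i => v (piv1 i)) (fun _ => True)
    (fun _ _ => trivial) (by rw [← hexp]; exact hv0)
  rw [← hexp] at hco1 hlow1
  obtain ⟨C, hC, hCv⟩ := exists_coeff_of_mem_subspan _ hv2
  obtain ⟨i2, hpr2, hco2, hlow2⟩ := rref_lead h2 C _ hC (by rw [hCv]; exact hv0)
  rw [hCv] at hco2 hlow2
  have := lead_unique hco1 hlow1 hco2 hlow2
  rw [idVec] at hpr2
  have : ∃ i, piv1 i = piv2 i2 := ⟨i1, this⟩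
  simp [this] at hpr2

theorem stack_card (h1 : IsRREFWithPivots M1 piv1) (h2 : IsRREFWithPivots M2 piv2)
    (hP : IsRREFWithPivots P pivP)
    (hsp : span F (Set.range P) = span F (Set.range (Matrix.fromRows M1
      (Matrix.of fun (i : {i : Fin b // idVec piv1 (piv2 i) = false}) j => M2 i.1 j)))) :
    r = a + Fintype.card {i : Fin b // idVec piv1 (piv2 i) = false} := by
  have hfr := rref_finrank hP
  rw [stack_spanP h1 h2 hP hsp] at hfr
  have hsum := Submodule.finrank_sup_add_finrank_inf_eq (span F (Set.range M1))
    (span F (Set.range fun i : {i : Fin b // idVec piv1 (piv2 i) = false} => M2 i.1))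
  rw [stack_disjoint h1 h2, finrank_bot, add_zero, hfr, rref_finrank h1,
    subspan_finrank h2] at hsum
  exact hsum

theorem stack_pivots (h1 : IsRREFWithPivots M1 piv1) (h2 : IsRREFWithPivots M2 piv2)
    (hP : IsRREFWithPivots P pivP)
    (hsp : span F (Set.range P) = span F (Set.range (Matrix.fromRows M1
      (Matrix.of fun (i : {i : Fin b // idVec piv1 (piv2 i) = false}) j => M2 i.1 j))))
    (c : Fin n) :
    (∃ r', pivP r' = c) ↔ ((∃ i, piv1 i = c) ∨ (∃ i, piv2 i = c)) := by
  classical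
  have hspP := stack_spanP h1 h2 hP hsp
  -- backward direction
  have hback : ∀ c : Fin n, ((∃ i, piv1 i = c) ∨ (∃ i, piv2 i = c)) → ∃ r', pivP r' = c := by
    have main : ∀ (w : Fin n → F) (c : Fin n), w ∈ span F (Set.range P) → w c ≠ 0 →
        (∀ j, j < c → w j = 0) → ∃ r', pivP r' = c := by
      intro w c hw hwc hwlow
      obtain ⟨r', -, hco, hlow⟩ := rref_lead hP (fun r' => w (pivP r')) (fun _ => True)
        (fun _ _ => trivial) (by rw [← rref_expand hP hw]; exact fun h0 => hwc (by rw [h0]; rfl))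
      rw [← rref_expand hP hw] at hco hlow
      exact ⟨r', lead_unique hco hlow hwc hwlow⟩
    intro c hc
    by_cases hA : ∃ i, piv1 i = c
    · obtain ⟨i, rfl⟩ := hA
      refine main (M1 i) (piv1 i) ?_ (by rw [h1.2.1]; exact one_ne_zero) (h1.2.2.1 i)
      rw [hspP]
      exact Submodule.mem_sup_left (Submodule.subset_span ⟨i, rfl⟩)
    · obtain ⟨i, rfl⟩ := hc.resolve_left hA
      have hpr : idVec piv1 (piv2 i) = false := by
        rw [idVec]; simpa using hA
      refine main (M2 i) (piv2 i) ?_ (by rw [h2.2.1]; exact one_ne_zero) (h2.2.2.1 i)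
      rw [hspP]
      exact Submodule.mem_sup_right (Submodule.subset_span ⟨⟨i, hpr⟩, rfl⟩)
  refine ⟨fun hex => ?_, hback c⟩
  -- forward via cardinality
  set U : Finset (Fin n) := (Finset.univ.image piv1) ∪
    (Finset.univ.image fun i : {i : Fin b // idVec piv1 (piv2 i) = false} => piv2 i.1) with hU
  have hUsub : U ⊆ Finset.univ.image pivP := by
    intro c hc
    rw [hU, Finset.mem_union] at hc
    have : (∃ i, piv1 i = c) ∨ (∃ i, piv2 i = c) := by
      rcases hc with hc | hc
      · obtain ⟨i, -, rfl⟩ := Finset.mem_image.1 hc; exact Or.inl ⟨i, rfl⟩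
      · obtain ⟨i, -, rfl⟩ := Finset.mem_image.1 hc; exact Or.inr ⟨i.1, rfl⟩
    obtain ⟨r', hr'⟩ := hback c this
    exact Finset.mem_image.2 ⟨r', Finset.mem_univ r', hr'⟩
  have hcardP : (Finset.univ.image pivP).card = r := by
    rw [Finset.card_image_of_injective _ hP.1.injective, Finset.card_univ, Fintype.card_fin]
  have hcardU : U.card = a + Fintype.card {i : Fin b // idVec piv1 (piv2 i) = false} := by
    rw [hU, Finset.card_union_of_disjoint, Finset.card_image_of_injective _ h1.1.injective,
      Finset.card_image_of_injective _ (fun i i' hii' => Subtype.ext (h2.1.injective hii')),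
      Finset.card_univ, Finset.card_univ, Fintype.card_fin]
    · rw [Finset.disjoint_left]
      rintro x hx hx'
      obtain ⟨i, -, rfl⟩ := Finset.mem_image.1 hx
      obtain ⟨i', -, he⟩ := Finset.mem_image.1 hx'
      have : idVec piv1 (piv2 i'.1) = false := i'.2
      rw [idVec] at this
      simp only [decide_eq_false_iff_not] at this
      exact this ⟨i, he.symm⟩
  have hUeq : U = Finset.univ.image pivP := by
    apply Finset.eq_of_subset_of_card_le hUsub
    rw [hcardP, hcardU, stack_card h1 h2 hP hsp]
  obtain ⟨r', rfl⟩ := hex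
  have : pivP r' ∈ U := by
    rw [hUeq]; exact Finset.mem_image.2 ⟨r', Finset.mem_univ r', rfl⟩
  rw [hU, Finset.mem_union] at this
  rcases this with hc | hc
  · obtain ⟨i, -, he⟩ := Finset.mem_image.1 hc; exact Or.inl ⟨i, he⟩
  · obtain ⟨i, -, he⟩ := Finset.mem_image.1 hc; exact Or.inr ⟨i.1, he⟩

end Stack

/-- **Theorem 1 of the paper.**
`d_S(X,Y) = d_H(v(X), v(Y)) + 2 rank(X̃_μ - Ỹ_μ)`.

Here `MX = RE(X)`, `MY = RE(Y)` (with pivot functions `pivX`, `pivY`),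
`P = RE(RE(X) * Y_{μ^C})` and `Q = RE(RE(Y) * X_{μ^C})` (with pivot functions
`pivP`, `pivQ`), and `X̃_μ` (resp. `Ỹ_μ`) is the submatrix of `P` (resp. `Q`)
consisting of the rows whose leading ones are in the columns indexed by
`μ(X,Y)`; its row with leading one in column `c ∈ μ(X,Y)` is row `sX c` of `P`
(resp. row `sY c` of `Q`). -/
theorem subDist_eq_hamming_add_rank {F : Type*} [Field F] [Fintype F] {n k1 k2 : ℕ}
    (X Y : Submodule F (Fin n → F))
    (MX : Matrix (Fin k1) (Fin n) F) (pivX : Fin k1 → Fin n)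
    (hMX : IsRREFWithPivots MX pivX)
    (hsX : Submodule.span F (Set.range MX) = X)
    (MY : Matrix (Fin k2) (Fin n) F) (pivY : Fin k2 → Fin n)
    (hMY : IsRREFWithPivots MY pivY)
    (hsY : Submodule.span F (Set.range MY) = Y)
    {rX rY : ℕ}
    (P : Matrix (Fin rX) (Fin n) F) (pivP : Fin rX → Fin n)
    (hP : IsRREFWithPivots P pivP)
    (hPspan : Submodule.span F (Set.range P) =
      Submodule.span F (Set.range (Matrix.fromRows MX
        (Matrix.of fun (i : {i : Fin k2 // idVec pivX (pivY i) = false}) j => MY i.1 j))))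
    (Q : Matrix (Fin rY) (Fin n) F) (pivQ : Fin rY → Fin n)
    (hQ : IsRREFWithPivots Q pivQ)
    (hQspan : Submodule.span F (Set.range Q) =
      Submodule.span F (Set.range (Matrix.fromRows MY
        (Matrix.of fun (i : {i : Fin k1 // idVec pivY (pivX i) = false}) j => MX i.1 j))))
    (sX : {c : Fin n // idVec pivX c = true ∧ idVec pivY c = true} → Fin rX)
    (hsXsel : ∀ c, pivP (sX c) = c.1)
    (sY : {c : Fin n // idVec pivX c = true ∧ idVec pivY c = true} → Fin rY)
    (hsYsel : ∀ c, pivQ (sY c) = c.1) :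
    subDist X Y =
      hammingDist (idVec pivX) (idVec pivY) +
        2 * (Matrix.of fun (c : {c : Fin n // idVec pivX c = true ∧ idVec pivY c = true})
              (j : Fin n) => P (sX c) j - Q (sY c) j).rank := by
  classical
  set D : Matrix {c : Fin n // idVec pivX c = true ∧ idVec pivY c = true} (Fin n) F :=
    Matrix.of fun (c : {c : Fin n // idVec pivX c = true ∧ idVec pivY c = true})
      (j : Fin n) => P (sX c) j - Q (sY c) j with hD
  set m := Fintype.card {c : Fin n // idVec pivX c = true ∧ idVec pivY c = true} with hm
  -- span decompositions
  have hspP := stack_spanP hMX hMY hP hPspan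
  have hspQ := stack_spanP hMY hMX hQ hQspan
  have hpivP := stack_pivots hMX hMY hP hPspan
  have hpivQ := stack_pivots hMY hMX hQ hQspan
  have hXleP : Submodule.span F (Set.range MX) ≤ Submodule.span F (Set.range P) := by
    rw [hspP]; exact le_sup_left
  have hYleQ : Submodule.span F (Set.range MY) ≤ Submodule.span F (Set.range Q) := by
    rw [hspQ]; exact le_sup_left
  -- the pivot-matching bijection e : Fin rX → Fin rY
  have he : ∀ r : Fin rX, ∃ r', pivQ r' = pivP r := fun r =>
    (hpivQ (pivP r)).2 (((hpivP (pivP r)).1 ⟨r, rfl⟩).symm)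
  have he' : ∀ r' : Fin rY, ∃ r, pivP r = pivQ r' := fun r' =>
    (hpivP (pivQ r')).2 (((hpivQ (pivQ r')).1 ⟨r', rfl⟩).symm)
  set e : Fin rX → Fin rY := fun r => (he r).choose with hedef
  have hee : ∀ r, pivQ (e r) = pivP r := fun r => (he r).choose_spec
  have heinj : Function.Injective e := fun r₁ r₂ h12 =>
    hP.1.injective (by rw [← hee r₁, ← hee r₂, h12])
  have hrXY : rX = rY := by
    have h1 : rX ≤ rY := by
      simpa using Fintype.card_le_of_injective e heinj
    have h2 : rY ≤ rX := by
      set e' : Fin rY → Fin rX := fun r' => (he' r').choose with he'def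
      have he'e : ∀ r', pivP (e' r') = pivQ r' := fun r' => (he' r').choose_spec
      have : Function.Injective e' := fun r₁ r₂ h12 =>
        hQ.1.injective (by rw [← he'e r₁, ← he'e r₂, h12])
      simpa using Fintype.card_le_of_injective _ this
    omega
  have hebij : Function.Bijective e :=
    (Fintype.bijective_iff_injective_and_card e).2 ⟨heinj, by simp [hrXY]⟩
  have hsXe : ∀ c : {c : Fin n // idVec pivX c = true ∧ idVec pivY c = true}, e (sX c) = sY c := fun c =>
    hQ.1.injective (by rw [hee, hsXsel, hsYsel])
  -- rows of P and Q with pivot outside μ agree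
  have key : ∀ t : ℕ, ∀ r : Fin rX, n - (pivP r : ℕ) ≤ t →
      ¬(idVec pivX (pivP r) = true ∧ idVec pivY (pivP r) = true) → P r = Q (e r) := by
    intro t
    induction t with
    | zero =>
      intro r hr _
      have := (pivP r).isLt
      omega
    | succ t ih =>
      intro r hrt hrμ
      have main : ∀ w : Fin n → F, w ∈ Submodule.span F (Set.range P) →
          w ∈ Submodule.span F (Set.range Q) → w (pivP r) = 1 →
          (∀ r'' : Fin rX, r'' ≠ r → w (pivP r'') ≠ 0 →
            ¬(idVec pivX (pivP r'') = true ∧ idVec pivY (pivP r'') = true) ∧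
              (pivP r : ℕ) < (pivP r'' : ℕ)) →
          P r = Q (e r) := by
        intro w hwP hwQ hw1 hcoef
        have hPexp := rref_expand hP hwP
        have hQexp' : w = ∑ r'', w (pivP r'') • Q (e r'') := by
          have h2 : ∑ r'', w (pivQ (e r'')) • Q (e r'') = ∑ r', w (pivQ r') • Q r' :=
            Function.Bijective.sum_comp hebij (fun r' => w (pivQ r') • Q r')
          conv_lhs => rw [rref_expand hQ hwQ]
          rw [← h2]
          exact Finset.sum_congr rfl fun r'' _ => by rw [hee]
        have hPr : P r = w - ∑ r'' ∈ Finset.univ.erase r, w (pivP r'') • P r'' := by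
          have h := hPexp
          rw [← Finset.add_sum_erase Finset.univ (fun r'' => w (pivP r'') • P r'')
            (Finset.mem_univ r), hw1, one_smul] at h
          exact eq_sub_of_add_eq h.symm
        have hQr : Q (e r) = w - ∑ r'' ∈ Finset.univ.erase r, w (pivP r'') • Q (e r'') := by
          have h := hQexp'
          rw [← Finset.add_sum_erase Finset.univ (fun r'' => w (pivP r'') • Q (e r''))
            (Finset.mem_univ r), hw1, one_smul] at h
          exact eq_sub_of_add_eq h.symm
        rw [hPr, hQr]
        congr 1
        refine Finset.sum_congr rfl fun r'' hr'' => ?_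
        have hne : r'' ≠ r := (Finset.mem_erase.1 hr'').1
        by_cases h0 : w (pivP r'') = 0
        · rw [h0, zero_smul, zero_smul]
        · obtain ⟨hnμ, hlt⟩ := hcoef r'' hne h0
          rw [ih r'' (by
            have h1 := (pivP r'').isLt
            have h2 := (pivP r).isLt
            omega) hnμ]
      rcases (hpivP (pivP r)).1 ⟨r, rfl⟩ with ⟨i, hi⟩ | ⟨i, hi⟩
      · -- pivot of r is a pivot of X (and not of Y)
        have hnotY : ¬∃ i', pivY i' = pivP r := by
          rintro ⟨i', hi'⟩
          exact hrμ ⟨idVec_true_iff.2 ⟨i, hi⟩, idVec_true_iff.2 ⟨i', hi'⟩⟩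
        refine main (MX i) (hXleP (Submodule.subset_span ⟨i, rfl⟩)) ?_ ?_ ?_
        · rw [hspQ]
          have hpr : idVec pivY (pivX i) = false := by
            rw [idVec_false_iff, hi]; exact hnotY
          exact Submodule.mem_sup_right (Submodule.subset_span ⟨⟨i, hpr⟩, rfl⟩)
        · rw [← hi]; exact hMX.2.1 i
        · intro r'' hne h0
          have hnX'' : ¬∃ i'', pivX i'' = pivP r'' := by
            rintro ⟨i'', hi''⟩
            by_cases hii : i'' = i
            · exact hne (hP.1.injective (by rw [← hi'', hii, hi]))
            · exact h0 (by rw [← hi'']; exact hMX.2.2.2 i'' i (fun h => hii h.symm))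
          refine ⟨fun hμ'' => hnX'' (idVec_true_iff.1 hμ''.1), ?_⟩
          have hne' : pivP r'' ≠ pivP r := fun h => hne (hP.1.injective h)
          rcases lt_or_gt_of_ne hne' with hlt | hgt
          · exact absurd (hMX.2.2.1 i (pivP r'') (by rw [hi]; exact hlt)) h0
          · exact hgt
      · -- pivot of r is a pivot of Y (and not of X)
        have hnotX : ¬∃ i', pivX i' = pivP r := by
          rintro ⟨i', hi'⟩
          exact hrμ ⟨idVec_true_iff.2 ⟨i', hi'⟩, idVec_true_iff.2 ⟨i, hi⟩⟩
        have hpr : idVec pivX (pivY i) = false := by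
          rw [idVec_false_iff, hi]; exact hnotX
        refine main (MY i) ?_ (hYleQ (Submodule.subset_span ⟨i, rfl⟩)) ?_ ?_
        · rw [hspP]
          exact Submodule.mem_sup_right (Submodule.subset_span ⟨⟨i, hpr⟩, rfl⟩)
        · rw [← hi]; exact hMY.2.1 i
        · intro r'' hne h0
          have hnY'' : ¬∃ i'', pivY i'' = pivP r'' := by
            rintro ⟨i'', hi''⟩
            by_cases hii : i'' = i
            · exact hne (hP.1.injective (by rw [← hi'', hii, hi]))
            · exact h0 (by rw [← hi'']; exact hMY.2.2.2 i'' i (fun h => hii h.symm))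
          refine ⟨fun hμ'' => hnY'' (idVec_true_iff.1 hμ''.2), ?_⟩
          have hne' : pivP r'' ≠ pivP r := fun h => hne (hP.1.injective h)
          rcases lt_or_gt_of_ne hne' with hlt | hgt
          · exact absurd (hMY.2.2.1 i (pivP r'') (by rw [hi]; exact hlt)) h0
          · exact hgt
  -- direction 1 : v ∈ X ⊓ Y gives kernel element
  have hdir1 : ∀ v : Fin n → F, v ∈ X ⊓ Y →
      ∑ c : {c : Fin n // idVec pivX c = true ∧ idVec pivY c = true}, v c.1 • (P (sX c) - Q (sY c)) = 0 := by
    intro v hv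
    obtain ⟨hvX, hvY⟩ := hv
    rw [← hsX] at hvX
    rw [← hsY] at hvY
    have hPexp := rref_expand hP (hXleP hvX)
    have hQexp' : v = ∑ r, v (pivP r) • Q (e r) := by
      have h2 : ∑ r, v (pivQ (e r)) • Q (e r) = ∑ r', v (pivQ r') • Q r' :=
        Function.Bijective.sum_comp hebij (fun r' => v (pivQ r') • Q r')
      conv_lhs => rw [rref_expand hQ (hYleQ hvY)]
      rw [← h2]
      exact Finset.sum_congr rfl fun r _ => by rw [hee]
    have hzero : ∑ r, v (pivP r) • (P r - Q (e r)) = 0 := by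
      have h3 : ∑ r, (v (pivP r) • P r - v (pivP r) • Q (e r)) = 0 := by
        rw [Finset.sum_sub_distrib, ← hPexp, ← hQexp', sub_self]
      simpa [smul_sub] using h3
    have hsplit := Finset.sum_filter_add_sum_filter_not Finset.univ
      (fun r : Fin rX => idVec pivX (pivP r) = true ∧ idVec pivY (pivP r) = true)
      (fun r => v (pivP r) • (P r - Q (e r)))
    have hnotmu : ∑ r ∈ Finset.univ.filter (fun r => ¬(idVec pivX (pivP r) = true ∧
        idVec pivY (pivP r) = true)), v (pivP r) • (P r - Q (e r)) = 0 := by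
      refine Finset.sum_eq_zero fun r hr => ?_
      rw [key n r (Nat.sub_le n _) (Finset.mem_filter.1 hr).2, sub_self, smul_zero]
    rw [hzero, hnotmu, add_zero] at hsplit
    rw [← hsplit]
    refine Finset.sum_bij (fun c _ => sX c) ?_ ?_ ?_ ?_
    · intro c _
      rw [Finset.mem_filter]
      refine ⟨Finset.mem_univ _, ?_⟩
      rw [hsXsel]
      exact c.2
    · intro c1 _ c2 _ hss
      have hss' : sX c1 = sX c2 := hss
      exact Subtype.ext (by rw [← hsXsel c1, ← hsXsel c2, hss'])
    · intro r hr
      refine ⟨⟨pivP r, (Finset.mem_filter.1 hr).2⟩, Finset.mem_univ _, ?_⟩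
      show sX _ = r
      exact hP.1.injective (by rw [hsXsel])
    · intro c _
      show v c.1 • (P (sX c) - Q (sY c)) = v (pivP (sX c)) • (P (sX c) - Q (e (sX c)))
      rw [hsXsel, hsXe]
  -- injectivity
  have hinj : ∀ v : Fin n → F, v ∈ X ⊓ Y → (∀ c : {c : Fin n // idVec pivX c = true ∧ idVec pivY c = true}, v c.1 = 0) → v = 0 := by
    intro v hv hc0
    obtain ⟨hvX, hvY⟩ := hv
    rw [← hsX] at hvX
    rw [← hsY] at hvY
    by_contra hv0
    have hvW' : v ∈ Submodule.span F
        (Set.range fun i : {i : Fin k1 // idVec pivY (pivX i) = false} => MX i.1) := by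
      rw [rref_expand hMX hvX]
      refine mem_subspan_of_coeff _ _ fun i hne => ?_
      cases hb : idVec pivY (pivX i) with
      | false => rfl
      | true => exact absurd (hc0 ⟨pivX i, idVec_true_iff.2 ⟨i, rfl⟩, hb⟩) hne
    have hvW : v ∈ Submodule.span F
        (Set.range fun i : {i : Fin k2 // idVec pivX (pivY i) = false} => MY i.1) := by
      rw [rref_expand hMY hvY]
      refine mem_subspan_of_coeff _ _ fun i hne => ?_
      cases hb : idVec pivX (pivY i) with
      | false => rfl
      | true => exact absurd (hc0 ⟨pivY i, hb, idVec_true_iff.2 ⟨i, rfl⟩⟩) hne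
    obtain ⟨C1, hC1p, hC1v⟩ := exists_coeff_of_mem_subspan _ hvW'
    obtain ⟨i1, hpred1, hco1, hlow1⟩ := rref_lead hMX C1 _ hC1p (by rw [hC1v]; exact hv0)
    rw [hC1v] at hco1 hlow1
    obtain ⟨C2, hC2p, hC2v⟩ := exists_coeff_of_mem_subspan _ hvW
    obtain ⟨i2, hpred2, hco2, hlow2⟩ := rref_lead hMY C2 _ hC2p (by rw [hC2v]; exact hv0)
    rw [hC2v] at hco2 hlow2
    have heq := lead_unique hco1 hlow1 hco2 hlow2
    rw [idVec_false_iff] at hpred1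
    exact hpred1 ⟨i2, heq.symm⟩
  -- surjectivity
  have hsurj : ∀ lam : {c : Fin n // idVec pivX c = true ∧ idVec pivY c = true} → F, (∑ c : {c : Fin n // idVec pivX c = true ∧ idVec pivY c = true}, lam c • (P (sX c) - Q (sY c)) = 0) →
      ∃ v, v ∈ X ⊓ Y ∧ ∀ c : {c : Fin n // idVec pivX c = true ∧ idVec pivY c = true}, v c.1 = lam c := by
    intro lam hlam
    have hu2 : (∑ c, lam c • P (sX c)) = ∑ c, lam c • Q (sY c) := by
      have h3 : ∑ c, (lam c • P (sX c) - lam c • Q (sY c)) = 0 := by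
        simpa [smul_sub] using hlam
      rw [Finset.sum_sub_distrib] at h3
      exact sub_eq_zero.1 h3
    have huP : (∑ c, lam c • P (sX c)) ∈ Submodule.span F (Set.range P) :=
      Submodule.sum_mem _ fun c _ =>
        Submodule.smul_mem _ _ (Submodule.subset_span ⟨sX c, rfl⟩)
    have huQ : (∑ c, lam c • P (sX c)) ∈ Submodule.span F (Set.range Q) := by
      rw [hu2]
      exact Submodule.sum_mem _ fun c _ =>
        Submodule.smul_mem _ _ (Submodule.subset_span ⟨sY c, rfl⟩)
    rw [hspP] at huP
    rw [hspQ] at huQ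
    obtain ⟨x, hx, w, hw, hxw⟩ := Submodule.mem_sup.1 huP
    obtain ⟨y, hy, w', hw', hyw'⟩ := Submodule.mem_sup.1 huQ
    have hWleY : Submodule.span F
        (Set.range fun i : {i : Fin k2 // idVec pivX (pivY i) = false} => MY i.1) ≤
        Submodule.span F (Set.range MY) :=
      Submodule.span_le.2 (by rintro _ ⟨i, rfl⟩; exact Submodule.subset_span ⟨i.1, rfl⟩)
    have hW'leX : Submodule.span F
        (Set.range fun i : {i : Fin k1 // idVec pivY (pivX i) = false} => MX i.1) ≤
        Submodule.span F (Set.range MX) :=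
      Submodule.span_le.2 (by rintro _ ⟨i, rfl⟩; exact Submodule.subset_span ⟨i.1, rfl⟩)
    have hudc : ∀ c : {c : Fin n // idVec pivX c = true ∧ idVec pivY c = true}, (∑ c', lam c' • P (sX c')) c.1 = lam c := by
      intro c
      have h4 : (∑ c', lam c' • P (sX c')) c.1 = ∑ c', lam c' * P (sX c') c.1 := by
        simp [Finset.sum_apply]
      rw [h4, Finset.sum_eq_single c]
      · rw [← hsXsel c, hP.2.1, mul_one]
      · intro c' _ hne
        have hss : sX c ≠ sX c' := fun hs =>
          hne (Subtype.ext (by rw [← hsXsel c', ← hsXsel c, hs]))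
        rw [← hsXsel c, hP.2.2.2 (sX c) (sX c') (fun h => hss h.symm), mul_zero]
      · simp
    have hwc : ∀ c : {c : Fin n // idVec pivX c = true ∧ idVec pivY c = true}, w c.1 = 0 := by
      intro c
      obtain ⟨i0, hi0⟩ := idVec_true_iff.1 c.2.2
      refine span_apply_zero ?_ hw
      rintro _ ⟨i, rfl⟩
      rw [← hi0]
      refine hMY.2.2.2 i0 i.1 fun hcon => ?_
      have hf := i.2
      rw [idVec_false_iff, hcon, hi0] at hf
      exact hf (idVec_true_iff.1 c.2.1)
    have hw'c : ∀ c : {c : Fin n // idVec pivX c = true ∧ idVec pivY c = true}, w' c.1 = 0 := by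
      intro c
      obtain ⟨i0, hi0⟩ := idVec_true_iff.1 c.2.1
      refine span_apply_zero ?_ hw'
      rintro _ ⟨i, rfl⟩
      rw [← hi0]
      refine hMX.2.2.2 i0 i.1 fun hcon => ?_
      have hf := i.2
      rw [idVec_false_iff, hcon, hi0] at hf
      exact hf (idVec_true_iff.1 c.2.2)
    refine ⟨x - w', ⟨?_, ?_⟩, ?_⟩
    · rw [← hsX]
      exact sub_mem hx (hW'leX hw')
    · rw [← hsY]
      have hxw2 : x - w' = y - w := by
        rw [eq_sub_of_add_eq hxw, eq_sub_of_add_eq hyw']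
        abel
      rw [hxw2]
      exact sub_mem hy (hWleY hw)
    · intro c
      have hxc : x c.1 = lam c := by
        rw [eq_sub_of_add_eq hxw]
        rw [Pi.sub_apply, hudc c, hwc c, sub_zero]
      rw [Pi.sub_apply, hxc, hw'c c, sub_zero]
  -- kernel description
  have hkermem : ∀ lam : {c : Fin n // idVec pivX c = true ∧ idVec pivY c = true} → F, lam ∈ LinearMap.ker (Matrix.vecMulLinear D) ↔
      ∑ c : {c : Fin n // idVec pivX c = true ∧ idVec pivY c = true}, lam c • (P (sX c) - Q (sY c)) = 0 := by
    intro lam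
    rw [LinearMap.mem_ker, Matrix.vecMulLinear_apply]
    constructor
    · intro h0
      funext j
      have := congrFun h0 j
      simpa [Matrix.vecMul, dotProduct, hD, Finset.sum_apply, smul_eq_mul,
        mul_sub] using this
    · intro h0
      funext j
      have := congrFun h0 j
      simpa [Matrix.vecMul, dotProduct, hD, Finset.sum_apply, smul_eq_mul,
        mul_sub] using this
  -- the linear equivalence
  have hIK : Module.finrank F ↥(X ⊓ Y) =
      Module.finrank F ↥(LinearMap.ker (Matrix.vecMulLinear D)) := by
    let φ : ↥(X ⊓ Y) →ₗ[F] ↥(LinearMap.ker (Matrix.vecMulLinear D)) :=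
      { toFun := fun v => ⟨fun c => (v : Fin n → F) c.1,
          (hkermem _).2 (hdir1 v.1 v.2)⟩
        map_add' := fun u v => rfl
        map_smul' := fun a v => rfl }
    have hφbij : Function.Bijective φ := by
      constructor
      · intro v₁ v₂ h12
        apply Subtype.ext
        have hd : (v₁ : Fin n → F) - v₂ ∈ X ⊓ Y := sub_mem v₁.2 v₂.2
        have hz : (v₁ : Fin n → F) - v₂ = 0 := by
          refine hinj _ hd fun c => ?_
          rw [Pi.sub_apply, sub_eq_zero]
          exact congrFun (congrArg Subtype.val h12) c
        exact sub_eq_zero.1 hz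
      · rintro ⟨lam, hlam⟩
        obtain ⟨v, hvXY, hvc⟩ := hsurj lam ((hkermem lam).1 hlam)
        exact ⟨⟨v, hvXY⟩, Subtype.ext (funext fun c => hvc c)⟩
    exact LinearEquiv.finrank_eq (LinearEquiv.ofBijective φ hφbij)
  -- rank-nullity
  have hRK : D.rank + Module.finrank F ↥(LinearMap.ker (Matrix.vecMulLinear D)) = m := by
    have h2 := LinearMap.finrank_range_add_finrank_ker (Matrix.vecMulLinear D)
    have h3 : Module.finrank F ↥(LinearMap.range (Matrix.vecMulLinear D)) = D.rank := by
      rw [range_vecMulLinear, Matrix.rank_eq_finrank_span_row]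
    rw [h3] at h2
    have h4 : Module.finrank F
        ({c : Fin n // idVec pivX c = true ∧ idVec pivY c = true} → F) = m := by
      rw [hm]
      exact Module.finrank_pi F
    rw [h4] at h2
    exact h2
  -- counting
  have hfX : Module.finrank F ↥X = k1 := by rw [← hsX]; exact rref_finrank hMX
  have hfY : Module.finrank F ↥Y = k2 := by rw [← hsY]; exact rref_finrank hMY
  have hH : hammingDist (idVec pivX) (idVec pivY) + 2 * m = k1 + k2 := by
    have hAcard : (Finset.univ.filter fun c : Fin n => idVec pivX c = true).card = k1 := by
      have heq : (Finset.univ.filter fun c : Fin n => idVec pivX c = true) =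
          Finset.univ.image pivX := by
        ext c
        rw [Finset.mem_filter, Finset.mem_image]
        constructor
        · rintro ⟨-, h⟩
          obtain ⟨i, hi⟩ := idVec_true_iff.1 h
          exact ⟨i, Finset.mem_univ i, hi⟩
        · rintro ⟨i, -, hi⟩
          exact ⟨Finset.mem_univ c, idVec_true_iff.2 ⟨i, hi⟩⟩
      rw [heq, Finset.card_image_of_injective _ hMX.1.injective, Finset.card_univ,
        Fintype.card_fin]
    have hBcard : (Finset.univ.filter fun c : Fin n => idVec pivY c = true).card = k2 := by
      have heq : (Finset.univ.filter fun c : Fin n => idVec pivY c = true) =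
          Finset.univ.image pivY := by
        ext c
        rw [Finset.mem_filter, Finset.mem_image]
        constructor
        · rintro ⟨-, h⟩
          obtain ⟨i, hi⟩ := idVec_true_iff.1 h
          exact ⟨i, Finset.mem_univ i, hi⟩
        · rintro ⟨i, -, hi⟩
          exact ⟨Finset.mem_univ c, idVec_true_iff.2 ⟨i, hi⟩⟩
      rw [heq, Finset.card_image_of_injective _ hMY.1.injective, Finset.card_univ,
        Fintype.card_fin]
    have hmcard : m = ((Finset.univ.filter fun c : Fin n => idVec pivX c = true) ∩
        (Finset.univ.filter fun c : Fin n => idVec pivY c = true)).card := by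
      rw [hm, Fintype.card_subtype, ← Finset.filter_and]
    have hdist : hammingDist (idVec pivX) (idVec pivY) =
        ((Finset.univ.filter fun c : Fin n => idVec pivX c = true) \
          (Finset.univ.filter fun c : Fin n => idVec pivY c = true)).card +
        ((Finset.univ.filter fun c : Fin n => idVec pivY c = true) \
          (Finset.univ.filter fun c : Fin n => idVec pivX c = true)).card := by
      rw [← Finset.card_union_of_disjoint disjoint_sdiff_sdiff]
      unfold hammingDist
      congr 1
      ext c
      cases hx : idVec pivX c <;> cases hy : idVec pivY c <;>
        simp [hx, hy, Finset.mem_sdiff, Finset.mem_filter]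
    have e1 := Finset.card_sdiff_add_card_inter
      (Finset.univ.filter fun c : Fin n => idVec pivX c = true)
      (Finset.univ.filter fun c : Fin n => idVec pivY c = true)
    have e2 := Finset.card_sdiff_add_card_inter
      (Finset.univ.filter fun c : Fin n => idVec pivY c = true)
      (Finset.univ.filter fun c : Fin n => idVec pivX c = true)
    rw [Finset.inter_comm] at e2
    omega
  rw [subDist, hfX, hfY, hIK]
  omega
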